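/- Let m ≥ 1 and let s be an integer with 0 ≤ s < m(q-1). Let δ be the minimum distance of the Reed–Muller code RM_q(s,m), and write s+1 = mt + r with t, r nonnegative integers and 0 ≤ r < m. Then RM_q(s,m) equals the hyperbolic code Hyp_q(d',m) for some integer d' ≥ 1 if and only if (q-t-1)^r (q-t)^{m-r} < δ; moreover, in this case RM_q(s,m) = Hyp_q(δ,m). -/

import Mathlib

open MvPolynomial Finset Pointwise

noncomputable section

/-- Evaluation of a multivariate polynomial at all points of `F^m`. -/
def evalPt {F : Type} [Field F] {m : ℕ} (f : MvPolynomial (Fin m) F) : (Fin m → F) → F :=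
  fun P => MvPolynomial.eval P f

/-- The monomial code `C_A = ev(F_q[A])`, the evaluations of the polynomials
whose monomial support is contained in `A`. -/
def monomialCode (F : Type) [Field F] (m : ℕ) (A : Set (Fin m →₀ ℕ)) :
    Set ((Fin m → F) → F) :=
  { v | ∃ f : MvPolynomial (Fin m) F, (↑f.support : Set (Fin m →₀ ℕ)) ⊆ A ∧ v = evalPt f }

/-- Exponent set of the Reed–Muller code `RM_q(s,m)` (empty when `s < 0`). -/
def RMset (q m : ℕ) (s : ℤ) : Set (Fin m →₀ ℕ) :=
  { i | (∀ j, i j < q) ∧ (∑ j, (i j : ℤ)) ≤ s }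

/-- Exponent set of the hyperbolic code `Hyp_q(d,m)`. -/
def Hypset (q m d : ℕ) : Set (Fin m →₀ ℕ) :=
  { i | (∀ j, i j < q) ∧ d ≤ ∏ j, (q - i j) }

/-- Exponent set of the cube code `Cube_q(s,m)`. -/
def Cubeset (m s : ℕ) : Set (Fin m →₀ ℕ) :=
  { i | ∀ j, i j ≤ s }

/-- Minimum distance of a code: least Hamming weight of a nonzero codeword. -/
def minDist {F : Type} [Field F] [Fintype F] [DecidableEq F] {m : ℕ}
    (C : Set ((Fin m → F) → F)) : ℕ :=
  sInf { w | ∃ v ∈ C, v ≠ 0 ∧ hammingNorm v = w }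

/-- Hamming distance from a word to a code. -/
def distToCode {F : Type} [Field F] [Fintype F] [DecidableEq F] {m : ℕ}
    (y : (Fin m → F) → F) (C : Set ((Fin m → F) → F)) : ℕ :=
  sInf { w | ∃ c ∈ C, hammingDist y c = w }

/-- `i`-fold Minkowski sum of `H` with itself (`0`-fold sum is `{0}`). -/
def iMink {m : ℕ} (H : Set (Fin m →₀ ℕ)) : ℕ → Set (Fin m →₀ ℕ)
  | 0 => {0}
  | i + 1 => iMink H i + H

/-- The sets `L(d,r,i)` from the Geil–Matsumoto list-decoding algorithm. -/
def Lset (q m d r i : ℕ) : Set (Fin m →₀ ℕ) :=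
  { a | (∀ j, a j < q) ∧ ∀ x ∈ iMink (Hypset q m d) i, a + x ∈ Hypset q m (r + 1) }

variable {F : Type} [Field F] [Fintype F] [DecidableEq F]

lemma uni_count (p : Polynomial F) (hp : p ≠ 0) :
    Fintype.card F - p.natDegree ≤ #{x : F | Polynomial.eval x p ≠ 0} := by
  classical
  have h1 : #{x : F | Polynomial.eval x p = 0} ≤ p.natDegree := by
    calc #{x : F | Polynomial.eval x p = 0} ≤ p.roots.toFinset.card := by
          apply Finset.card_le_card
          intro x hx
          simp only [Finset.mem_filter] at hx
          rw [Multiset.mem_toFinset, Polynomial.mem_roots hp]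
          exact hx.2
      _ ≤ Multiset.card p.roots := p.roots.toFinset_card_le
      _ ≤ p.natDegree := Polynomial.card_roots' p
  have h2 := Finset.card_filter_add_card_filter_not
    (s := (Finset.univ : Finset F)) (p := fun x => Polynomial.eval x p = 0)
  simp only [Finset.card_univ, ne_eq] at h2 ⊢
  omega

lemma footprint : ∀ (m : ℕ) (f : MvPolynomial (Fin m) F), f ≠ 0 →
    ∃ e ∈ f.support, (∏ j, (Fintype.card F - e j)) ≤
      #{P : Fin m → F | MvPolynomial.eval P f ≠ 0} := by
  intro m
  induction m with
  | zero =>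
    intro f hf
    obtain ⟨e, he⟩ := (MvPolynomial.support_nonempty.mpr hf)
    refine ⟨e, he, ?_⟩
    simp only [Finset.univ_eq_empty, Finset.prod_empty]
    have : ∃ P : Fin 0 → F, MvPolynomial.eval P f ≠ 0 := by
      obtain ⟨c, rfl⟩ := MvPolynomial.C_surjective (Fin 0) f
      refine ⟨finZeroElim, ?_⟩
      simp only [MvPolynomial.eval_C]
      exact fun h => hf (by rw [h, map_zero])
    obtain ⟨P, hP⟩ := this
    have : P ∈ {P : Fin 0 → F | MvPolynomial.eval P f ≠ 0}.toFinset ∨ True := Or.inr trivial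
    refine Finset.card_pos.mpr ⟨P, ?_⟩
    simp only [Finset.mem_filter, Finset.mem_univ, true_and]
    exact hP
  | succ m ih =>
    intro f hf
    set q := Fintype.card F with hqdef
    set g := MvPolynomial.finSuccEquiv F m f with hgdef
    have hgne : g ≠ 0 := by
      simp only [hgdef, ne_eq, EmbeddingLike.map_eq_zero_iff]
      exact hf
    set k := g.natDegree with hkdef
    have hlc : g.coeff k ≠ 0 := by
      rw [← Polynomial.leadingCoeff]
      exact Polynomial.leadingCoeff_ne_zero.mpr hgne
    obtain ⟨e', he's, he'⟩ := ih (g.coeff k) hlc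
    refine ⟨Finsupp.cons k e', MvPolynomial.mem_support_coeff_finSuccEquiv.mp he's, ?_⟩
    have hprod : (∏ j : Fin (m+1), (q - (Finsupp.cons k e') j)) =
        (q - k) * ∏ j : Fin m, (q - e' j) := by
      rw [Fin.prod_univ_succ]
      simp [Finsupp.cons_zero, Finsupp.cons_succ]
    rw [hprod]
    -- per-fiber bound
    have key : ∀ p : Fin m → F, MvPolynomial.eval p (g.coeff k) ≠ 0 →
        (q - k) ≤ #{y : F | MvPolynomial.eval (Fin.cons y p) f ≠ 0} := by
      intro p hp
      have heval : ∀ y : F, MvPolynomial.eval (Fin.cons y p) f =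
          Polynomial.eval y (Polynomial.map (MvPolynomial.eval p) g) :=
        fun y => MvPolynomial.eval_eq_eval_mv_eval' p y f
      have hne : Polynomial.map (MvPolynomial.eval p) g ≠ 0 := by
        intro h0
        apply hp
        rw [← Polynomial.coeff_map, h0, Polynomial.coeff_zero]
      have hdeg : (Polynomial.map (MvPolynomial.eval p) g).natDegree ≤ k :=
        Polynomial.natDegree_map_le
      calc q - k ≤ q - (Polynomial.map (MvPolynomial.eval p) g).natDegree :=
            Nat.sub_le_sub_left hdeg q
        _ ≤ #{y : F | Polynomial.eval y (Polynomial.map (MvPolynomial.eval p) g) ≠ 0} :=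
            uni_count _ hne
        _ = #{y : F | MvPolynomial.eval (Fin.cons y p) f ≠ 0} := by
            congr 1
            apply Finset.filter_congr
            intro y _
            rw [heval]
    have hcard : #{P : Fin (m+1) → F | MvPolynomial.eval P f ≠ 0} =
        ∑ p : Fin m → F, #{y : F | MvPolynomial.eval (Fin.cons y p) f ≠ 0} := by
      rw [Finset.card_eq_sum_card_fiberwise (f := fun P : Fin (m+1) → F => Fin.tail P)
        (t := Finset.univ) (fun _ _ => Finset.mem_univ _)]
      apply Finset.sum_congr rfl
      intro p _
      apply Finset.card_nbij' (fun P => P 0) (fun y => Fin.cons y p)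
      case hi =>
        intro P hP
        simp only [Finset.mem_coe, Finset.mem_filter, Finset.mem_univ, true_and] at hP ⊢
        obtain ⟨h1, h2⟩ := hP
        rw [← h2, Fin.cons_self_tail]
        exact h1
      case hj =>
        intro y hy
        simp only [Finset.mem_coe, Finset.mem_filter, Finset.mem_univ, true_and] at hy ⊢
        exact ⟨hy, by simp⟩
      case left_inv =>
        intro P hP
        simp only [Finset.mem_coe, Finset.mem_filter, Finset.mem_univ, true_and] at hP
        rw [← hP.2]
        exact Fin.cons_self_tail P
      case right_inv =>
        intro y hy
        simp only [Fin.cons_zero]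
    rw [hcard]
    calc (q - k) * ∏ j : Fin m, (q - e' j)
        ≤ (q - k) * #{p : Fin m → F | MvPolynomial.eval p (g.coeff k) ≠ 0} :=
          Nat.mul_le_mul_left _ he'
      _ = ∑ _p ∈ {p : Fin m → F | MvPolynomial.eval p (g.coeff k) ≠ 0}, (q - k) := by
          rw [Finset.sum_const, smul_eq_mul, mul_comm]
      _ ≤ ∑ p ∈ {p : Fin m → F | MvPolynomial.eval p (g.coeff k) ≠ 0},
            #{y : F | MvPolynomial.eval (Fin.cons y p) f ≠ 0} := by
          apply Finset.sum_le_sum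
          intro p hp
          simp only [Finset.mem_filter, Finset.mem_univ, true_and] at hp
          exact key p hp
      _ ≤ ∑ p : Fin m → F, #{y : F | MvPolynomial.eval (Fin.cons y p) f ≠ 0} :=
          Finset.sum_le_sum_of_subset (Finset.subset_univ _)

lemma sum_single_univ {m : ℕ} (i : Fin m →₀ ℕ) :
    (∑ j, Finsupp.single j (i j)) = i := by
  ext a
  rw [Finsupp.finset_sum_apply]
  simp [Finsupp.single_apply]

lemma support_prod_le {m : ℕ} {ι : Type} (s : Finset ι) (g : ι → MvPolynomial (Fin m) F)
    (b : ι → (Fin m →₀ ℕ)) (h : ∀ x ∈ s, ∀ e ∈ (g x).support, e ≤ b x) :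
    ∀ e ∈ (∏ x ∈ s, g x).support, e ≤ ∑ x ∈ s, b x := by
  classical
  induction s using Finset.induction with
  | empty =>
    intro e he
    simp only [Finset.prod_empty, Finset.sum_empty] at he ⊢
    rw [MvPolynomial.mem_support_iff, MvPolynomial.coeff_one] at he
    by_cases h0 : e = 0
    · exact le_of_eq h0
    · simp [h0] at he
      exact le_of_eq he.symm
  | @insert x s hx ih =>
    rw [Finset.prod_insert hx, Finset.sum_insert hx]
    intro e he
    have hmem := MvPolynomial.support_mul _ _ he
    rw [Finset.mem_add] at hmem
    obtain ⟨u, hu, v, hv, rfl⟩ := hmem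
    exact add_le_add (h x (Finset.mem_insert_self x s) u hu)
      (ih (fun y hy => h y (Finset.mem_insert_of_mem hy)) v hv)

lemma hammingNorm_evalPt {m : ℕ} (f : MvPolynomial (Fin m) F) :
    hammingNorm (evalPt f) = #{P : Fin m → F | MvPolynomial.eval P f ≠ 0} := rfl

lemma construct {m : ℕ} (i : Fin m →₀ ℕ) (hi : ∀ j, i j < Fintype.card F) :
    ∃ f : MvPolynomial (Fin m) F, (∀ e ∈ f.support, e ≤ i) ∧
      hammingNorm (evalPt f) = ∏ j, (Fintype.card F - i j) := by
  classical
  have hS : ∀ j : Fin m, ∃ S : Finset F, S ⊆ Finset.univ ∧ S.card = i j := by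
    intro j
    exact Finset.exists_subset_card_eq (s := Finset.univ) (n := i j)
      (by rw [Finset.card_univ]; exact (hi j).le)
  choose S _ hScard using hS
  refine ⟨∏ j, ∏ c ∈ S j, (MvPolynomial.X j - MvPolynomial.C c), ?_, ?_⟩
  · intro e he
    have := support_prod_le Finset.univ _ (fun j => Finsupp.single j (i j)) ?_ e he
    · rwa [sum_single_univ] at this
    · intro j _
      intro e' he'
      have := support_prod_le (S j) _ (fun _ => Finsupp.single j 1) ?_ e' he'
      · rw [Finset.sum_const, hScard j, Finsupp.smul_single, smul_eq_mul, mul_one] at this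
        exact this
      · intro c _ e'' he''
        rw [MvPolynomial.mem_support_iff] at he''
        by_contra hle
        apply he''
        have h1 : ¬ (Finsupp.single j 1 = e'') := fun h => hle (le_of_eq h.symm)
        have h0 : ¬ ((0:Fin m →₀ ℕ) = e'') := fun h => hle (h ▸ (zero_le : (0:Fin m →₀ ℕ) ≤ Finsupp.single j 1) : e'' ≤ Finsupp.single j 1)
        rw [MvPolynomial.coeff_sub, MvPolynomial.coeff_X', MvPolynomial.coeff_C,
          if_neg h1, if_neg h0, sub_zero]
  · rw [hammingNorm_evalPt]
    have heval : ∀ P : Fin m → F,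
        MvPolynomial.eval P (∏ j, ∏ c ∈ S j, (MvPolynomial.X j - MvPolynomial.C c)) =
          ∏ j, ∏ c ∈ S j, (P j - c) := by
      intro P
      rw [map_prod]
      apply Finset.prod_congr rfl
      intro j _
      rw [map_prod]
      apply Finset.prod_congr rfl
      intro c _
      simp
    have hfilter : Finset.filter (fun P : Fin m → F =>
        MvPolynomial.eval P (∏ j, ∏ c ∈ S j, (MvPolynomial.X j - MvPolynomial.C c)) ≠ 0)
          Finset.univ
        = Fintype.piFinset (fun j => (S j)ᶜ) := by
      ext P
      simp only [Finset.mem_filter, Finset.mem_univ, true_and, Fintype.mem_piFinset,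
        Finset.mem_compl, heval, Finset.prod_ne_zero_iff, sub_ne_zero]
      constructor
      · intro h j hPj
        exact h j trivial (P j) hPj rfl
      · intro h j _ c hc
        exact fun hEq => h j (hEq ▸ hc)
    rw [hfilter, Fintype.card_piFinset]
    apply Finset.prod_congr rfl
    intro j _
    rw [Finset.card_compl, hScard j]

lemma balanced_max (m : ℕ) (hm : 0 < m) (N : ℕ) :
    ∀ (V : ℕ) (y : Fin m → ℕ), (∑ j, (y j)^2) ≤ V → (∀ j, 1 ≤ y j) → (∑ j, y j) = N →
      ∏ j, y j ≤ (N / m)^(m - N % m) * (N / m + 1)^(N % m) := by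
  intro V
  induction V with
  | zero =>
    intro y hV hy hN
    exfalso
    have h1 : 1 ≤ ∑ j, (y j)^2 := by
      have hj0 : (⟨0, hm⟩ : Fin m) ∈ Finset.univ := Finset.mem_univ _
      calc 1 ≤ (y ⟨0, hm⟩)^2 := Nat.one_le_pow _ _ (hy _)
        _ ≤ ∑ j, (y j)^2 :=
          Finset.single_le_sum (f := fun j => (y j)^2) (fun _ _ => Nat.zero_le _) hj0
    omega
  | succ V ih =>
    intro y hV hy hN
    by_cases hbal : ∃ j k, y k + 2 ≤ y j
    · obtain ⟨j, k, hjk⟩ := hbal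
      have hyk : 1 ≤ y k := hy k
      have hjne : j ≠ k := by intro h; rw [h] at hjk; omega
      set y' : Fin m → ℕ := Function.update (Function.update y j (y j - 1)) k (y k + 1)
        with hy'def
      have hj_mem : j ∈ (Finset.univ : Finset (Fin m)).erase k :=
        Finset.mem_erase.mpr ⟨hjne, Finset.mem_univ j⟩
      have e1 : ∀ (f : Fin m → ℕ), ∑ x, f x = f k + (f j + ∑ x ∈ (Finset.univ.erase k).erase j, f x) := by
        intro f
        rw [← Finset.add_sum_erase _ f (Finset.mem_univ k), ← Finset.add_sum_erase _ f hj_mem]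
      have e2 : ∀ (f : Fin m → ℕ), ∏ x, f x = f k * (f j * ∏ x ∈ (Finset.univ.erase k).erase j, f x) := by
        intro f
        rw [← Finset.mul_prod_erase _ f (Finset.mem_univ k), ← Finset.mul_prod_erase _ f hj_mem]
      have hy'j : y' j = y j - 1 := by
        rw [hy'def, Function.update_of_ne hjne, Function.update_self]
      have hy'k : y' k = y k + 1 := by rw [hy'def, Function.update_self]
      have hy'x : ∀ x, x ≠ k → x ≠ j → y' x = y x := by
        intro x hxk hxj
        rw [hy'def, Function.update_of_ne hxk, Function.update_of_ne hxj]
      have hcongr : ∀ (g : ℕ → ℕ), ∑ x ∈ (Finset.univ.erase k).erase j, g (y' x)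
          = ∑ x ∈ (Finset.univ.erase k).erase j, g (y x) := by
        intro g
        apply Finset.sum_congr rfl
        intro x hx
        rw [hy'x x (Finset.mem_erase.mp (Finset.mem_erase.mp hx).2).1 (Finset.mem_erase.mp hx).1]
      have hcongrP : ∏ x ∈ (Finset.univ.erase k).erase j, y' x
          = ∏ x ∈ (Finset.univ.erase k).erase j, y x := by
        apply Finset.prod_congr rfl
        intro x hx
        rw [hy'x x (Finset.mem_erase.mp (Finset.mem_erase.mp hx).2).1 (Finset.mem_erase.mp hx).1]
      obtain ⟨b1, hb1⟩ : ∃ b1, y j = b1 + 1 := ⟨y j - 1, by omega⟩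
      have hab : y k + 1 ≤ b1 := by omega
      -- new sum
      have hsum' : (∑ x, y' x) = N := by
        rw [e1 y'] at *
        rw [e1 y] at hN
        rw [hy'j, hy'k, hcongr (fun n => n)]
        omega
      -- new sum of squares
      have hVsq : (∑ x, (y' x)^2) ≤ V := by
        rw [e1 (fun x => (y' x)^2), e1 (fun x => (y x)^2)] at *
        rw [hy'j, hy'k, hcongr (fun n => n^2)] at *
        have hsq : (y k + 1)^2 + (y j - 1)^2 + 2 ≤ (y k)^2 + (y j)^2 := by
          rw [hb1]
          simp only [Nat.add_sub_cancel]
          nlinarith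
        omega
      -- product comparison
      have hprodle : (∏ x, y x) ≤ ∏ x, y' x := by
        rw [e2 y, e2 y', hy'j, hy'k, hcongrP, ← mul_assoc, ← mul_assoc]
        apply Nat.mul_le_mul_right
        rw [hb1]
        simp only [Nat.add_sub_cancel]
        nlinarith
      have hy'pos : ∀ x, 1 ≤ y' x := by
        intro x
        rcases eq_or_ne x k with rfl | hxk
        · omega
        rcases eq_or_ne x j with rfl | hxj
        · rw [hy'j]; omega
        · rw [hy'x x hxk hxj]; exact hy x
      exact le_trans hprodle (ih y' hVsq hy'pos hsum')
    · -- balanced case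
      push_neg at hbal
      obtain ⟨jm, _, hjm⟩ := Finset.exists_min_image Finset.univ y ⟨⟨0, hm⟩, Finset.mem_univ _⟩
      set c := y jm with hc
      have hbounds : ∀ j, c ≤ y j ∧ y j ≤ c + 1 := by
        intro j
        refine ⟨hjm j (Finset.mem_univ j), ?_⟩
        have := hbal j jm
        omega
      set T := Finset.filter (fun j => y j = c + 1) Finset.univ with hT
      set u := T.card with hu
      have hcards := Finset.card_filter_add_card_filter_not
        (s := (Finset.univ : Finset (Fin m))) (p := fun j => y j = c + 1)
      simp only [Finset.card_univ, Fintype.card_fin] at hcards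
      rw [← hT] at hcards
      have hulm : u < m := by
        have hjmT : jm ∉ T := by
          rw [hT, Finset.mem_filter]
          push_neg
          intro _
          omega
        have : T ≠ Finset.univ := fun h => hjmT (h ▸ Finset.mem_univ jm)
        have hle : T ⊆ Finset.univ := Finset.filter_subset _ _
        have := Finset.card_lt_card (lt_of_le_of_ne hle this)
        simpa using this
      -- compute sum
      have hsumc : (∑ x, y x) = u * (c+1) + (m - u) * c := by
        rw [← Finset.sum_filter_add_sum_filter_not Finset.univ (fun j => y j = c + 1) y]
        congr 1
        · rw [Finset.sum_congr rfl (fun x hx => (Finset.mem_filter.mp hx).2),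
            Finset.sum_const, smul_eq_mul]
        · rw [Finset.sum_congr rfl (g := fun _ => c) (fun x hx => by
            have := (hbounds x).1; have := (hbounds x).2
            have := (Finset.mem_filter.mp hx).2
            show y x = c
            omega), Finset.sum_const, smul_eq_mul]
          congr 1
          omega
      have hprodc : (∏ x, y x) = (c+1)^u * c^(m - u) := by
        rw [← Finset.prod_filter_mul_prod_filter_not Finset.univ (fun j => y j = c + 1) y]
        congr 1
        · rw [Finset.prod_congr rfl (fun x hx => (Finset.mem_filter.mp hx).2),
            Finset.prod_const]
        · rw [Finset.prod_congr rfl (g := fun _ => c) (fun x hx => by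
            have := (hbounds x).1; have := (hbounds x).2
            have := (Finset.mem_filter.mp hx).2
            show y x = c
            omega), Finset.prod_const]
          congr 1
          omega
      have hNval : N = m * c + u := by
        rw [← hN, hsumc]
        obtain ⟨w, hw⟩ := Nat.exists_eq_add_of_le hulm.le
        rw [hw]
        simp only [Nat.add_sub_cancel_left]
        ring
      have hmod : N % m = u := by
        rw [hNval, Nat.mul_add_mod, Nat.mod_eq_of_lt hulm]
      have hdiv : N / m = c := by
        rw [hNval, Nat.mul_add_div hm, Nat.div_eq_of_lt hulm, Nat.add_zero]
      rw [hmod, hdiv, hprodc, mul_comm]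

lemma evalPt_sub_eval {m : ℕ} (f g : MvPolynomial (Fin m) F) (h : evalPt f = evalPt g)
    (P : Fin m → F) : MvPolynomial.eval P (f - g) = 0 := by
  have := congrFun h P
  simp only [evalPt] at this
  rw [map_sub, this, sub_self]

lemma code_subset_sets {m : ℕ} (A B : Set (Fin m →₀ ℕ))
    (hA : ∀ i ∈ A, ∀ j, i j < Fintype.card F)
    (hB : ∀ i ∈ B, ∀ j, i j < Fintype.card F)
    (hsub : {v | ∃ f : MvPolynomial (Fin m) F,
        (↑f.support : Set (Fin m →₀ ℕ)) ⊆ A ∧ v = evalPt f} ⊆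
      {v | ∃ f : MvPolynomial (Fin m) F,
        (↑f.support : Set (Fin m →₀ ℕ)) ⊆ B ∧ v = evalPt f}) :
    A ⊆ B := by
  classical
  intro i hiA
  by_contra hiB
  have hmem : evalPt (MvPolynomial.monomial i (1:F)) ∈
      {v | ∃ f : MvPolynomial (Fin m) F,
        (↑f.support : Set (Fin m →₀ ℕ)) ⊆ A ∧ v = evalPt f} := by
    refine ⟨MvPolynomial.monomial i (1:F), ?_, rfl⟩
    rw [MvPolynomial.support_monomial]
    simp only [one_ne_zero, if_false]
    intro e he
    simp only [Finset.coe_singleton, Set.mem_singleton_iff] at he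
    exact he ▸ hiA
  obtain ⟨f, hfsupp, hfeq⟩ := hsub hmem
  set g := f - MvPolynomial.monomial i (1:F) with hg
  have hcoefff : MvPolynomial.coeff i f = 0 := by
    rw [← MvPolynomial.notMem_support_iff]
    intro hc
    exact hiB (hfsupp hc)
  have hgne : g ≠ 0 := by
    intro h0
    have : MvPolynomial.coeff i g = 0 := by rw [h0]; simp
    rw [hg, MvPolynomial.coeff_sub, hcoefff, MvPolynomial.coeff_monomial, if_pos rfl] at this
    simp at this
  obtain ⟨e, hes, hbound⟩ := footprint m g hgne
  have hgz : ∀ P, MvPolynomial.eval P g = 0 := fun P => evalPt_sub_eval f _ hfeq.symm P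
  have hzero : #{P : Fin m → F | MvPolynomial.eval P g ≠ 0} = 0 := by
    rw [Finset.card_eq_zero, Finset.filter_eq_empty_iff]
    intro P _
    simp [hgz P]
  rw [hzero, Nat.le_zero, Finset.prod_eq_zero_iff] at hbound
  obtain ⟨j, _, hj⟩ := hbound
  have hecube : ∀ j', e j' < Fintype.card F := by
    have := MvPolynomial.support_sub (σ := Fin m) f (MvPolynomial.monomial i (1:F)) hes
    rw [Finset.mem_union] at this
    rcases this with h | h
    · exact hB e (hfsupp h)
    · rw [MvPolynomial.support_monomial] at h
      simp only [one_ne_zero, if_false, Finset.mem_singleton] at h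
      exact h ▸ hA i hiA
  have := hecube j
  omega

lemma card_filter_lt_fin (m r : ℕ) (hr : r ≤ m) :
    #(Finset.filter (fun j : Fin m => (j:ℕ) < r) Finset.univ) = r := by
  have heq : Finset.filter (fun j : Fin m => (j:ℕ) < r) Finset.univ =
      Finset.map (Fin.castLEEmb hr) Finset.univ := by
    ext x
    simp only [Finset.mem_filter, Finset.mem_univ, true_and, Finset.mem_map]
    constructor
    · intro hx
      refine ⟨⟨x.val, hx⟩, ?_⟩
      apply Fin.ext
      simp [Fin.castLEEmb, Fin.castLE]
    · rintro ⟨y, rfl⟩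
      simpa [Fin.castLEEmb, Fin.castLE] using y.2
  rw [heq, Finset.card_map, Finset.card_univ, Fintype.card_fin]

/-- `RM_q(s,m)` (with minimum distance `δ`) is a hyperbolic code iff
`(q-t-1)^r (q-t)^{m-r} < δ`, where `s+1 = mt + r`, `0 ≤ r < m`; and in that case
`RM_q(s,m) = Hyp_q(δ,m)`. -/
theorem statement1 (F : Type) [Field F] [Fintype F] [DecidableEq F]
    (q m s t r : ℕ) (hq : Fintype.card F = q) (hm : 1 ≤ m) (hs : s < m * (q - 1))
    (hstr : s + 1 = m * t + r) (hr : r < m) :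
    ((∃ d' : ℕ, 1 ≤ d' ∧
        monomialCode F m (RMset q m (s : ℤ)) = monomialCode F m (Hypset q m d')) ↔
      (q - t - 1) ^ r * (q - t) ^ (m - r) <
        minDist (monomialCode F m (RMset q m (s : ℤ)))) ∧
    ((q - t - 1) ^ r * (q - t) ^ (m - r) <
        minDist (monomialCode F m (RMset q m (s : ℤ))) →
      monomialCode F m (RMset q m (s : ℤ)) =
        monomialCode F m (Hypset q m (minDist (monomialCode F m (RMset q m (s : ℤ)))))) := by
  classical
  subst hq
  set q := Fintype.card F with hqdef
  have hq2 : 2 ≤ q := Fintype.one_lt_card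
  set A := RMset q m (s : ℤ) with hA
  set C := monomialCode F m A with hC
  set δ := minDist C with hδ
  set M := (q - t - 1) ^ r * (q - t) ^ (m - r) with hM
  -- basic memberships
  have hmemA : ∀ i : Fin m →₀ ℕ, i ∈ A ↔ ((∀ j, i j < q) ∧ (∑ j, ((i j : ℕ) : ℤ)) ≤ (s:ℤ)) := by
    intro i; rfl
  have hmemH : ∀ (d : ℕ) (i : Fin m →₀ ℕ), i ∈ Hypset q m d ↔
      ((∀ j, i j < q) ∧ d ≤ ∏ j, (q - i j)) := by
    intro d i; rfl
  have hmemC : ∀ v, v ∈ C ↔ ∃ f : MvPolynomial (Fin m) F,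
      (↑f.support : Set (Fin m →₀ ℕ)) ⊆ A ∧ v = evalPt f := by
    intro v; rfl
  -- sum in ℕ
  have hsumA : ∀ i : Fin m →₀ ℕ, i ∈ A ↔ ((∀ j, i j < q) ∧ (∑ j, i j) ≤ s) := by
    intro i
    rw [hmemA]
    constructor
    · rintro ⟨h1, h2⟩
      refine ⟨h1, ?_⟩
      have : ((∑ j, i j : ℕ) : ℤ) ≤ (s:ℤ) := by push_cast; exact h2
      exact_mod_cast this
    · rintro ⟨h1, h2⟩
      refine ⟨h1, ?_⟩
      push_cast
      exact_mod_cast h2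
  -- the weight set
  set W := { w | ∃ v ∈ C, v ≠ 0 ∧ hammingNorm v = w } with hW
  have hWne : W.Nonempty := by
    refine ⟨hammingNorm (evalPt (MvPolynomial.C (1:F))), evalPt (MvPolynomial.C (1:F)), ?_, ?_, rfl⟩
    · refine (hmemC _).mpr ⟨MvPolynomial.C 1, ?_, rfl⟩
      rw [show (MvPolynomial.C (1:F)) = MvPolynomial.monomial 0 1 from (MvPolynomial.C_apply ..),
        MvPolynomial.support_monomial]
      simp only [one_ne_zero, if_false]
      intro e he
      simp only [Finset.coe_singleton, Set.mem_singleton_iff] at he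
      subst he
      rw [hsumA]
      constructor
      · intro j; simp; omega
      · simp
    · intro h0
      have := congrFun h0 (fun _ => 0)
      simp only [evalPt, MvPolynomial.eval_C, Pi.zero_apply] at this
      exact one_ne_zero this
  have hδW : δ ∈ W := Nat.sInf_mem hWne
  -- lower bound machinery
  have hlow : ∀ (B : Set (Fin m →₀ ℕ)) (v : (Fin m → F) → F),
      v ∈ monomialCode F m B → v ≠ 0 → ∃ e ∈ B, (∏ j, (q - e j)) ≤ hammingNorm v := by
    intro B v hv hvne
    obtain ⟨f, hfsupp, rfl⟩ := hv
    have hfne : f ≠ 0 := by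
      intro h0
      apply hvne
      funext P
      rw [h0]
      simp [evalPt]
    obtain ⟨e, hes, hbound⟩ := footprint m f hfne
    exact ⟨e, hfsupp hes, hbound⟩
  -- δ ≤ P(i) for i ∈ A
  have hup : ∀ i ∈ A, δ ≤ ∏ j, (q - i j) := by
    intro i hiA
    rw [hsumA] at hiA
    obtain ⟨hiq, his⟩ := hiA
    obtain ⟨f, hfsupp, hfnorm⟩ := construct i hiq
    have hmemf : evalPt f ∈ C := by
      refine (hmemC _).mpr ⟨f, ?_, rfl⟩
      intro e he
      have hle := hfsupp e he
      rw [hsumA]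
      constructor
      · intro j; exact lt_of_le_of_lt (hle j) (hiq j)
      · exact le_trans (Finset.sum_le_sum (fun j _ => hle j)) his
    have hpos : 1 ≤ ∏ j, (Fintype.card F - i j) := by
      apply Finset.one_le_prod'
      intro j _
      have := hiq j
      omega
    have hvne : evalPt f ≠ 0 := by
      intro h0
      have : hammingNorm (evalPt f) ≠ 0 := by rw [hfnorm]; omega
      rw [h0, hammingNorm_zero] at this
      exact this rfl
    have hle : δ ≤ hammingNorm (evalPt f) := Nat.sInf_le ⟨evalPt f, hmemf, hvne, rfl⟩
    rw [hfnorm] at hle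
    exact hle
  -- arithmetic facts
  have hδpos : 1 ≤ δ := by
    obtain ⟨v0, hv0C, hv0ne, hv0n⟩ := hδW
    have : hammingNorm v0 ≠ 0 := fun h => hv0ne (hammingNorm_eq_zero.mp h)
    omega
  have hsle : m * t + r ≤ m * (q - 1) := by omega
  have hid1 : m * (q - 1) + m = m * q := by
    rw [← Nat.mul_succ]
    congr 1
    omega
  have htq : t + 1 ≤ q := by
    by_contra h
    push_neg at h
    have hmul : m * q ≤ m * t := Nat.mul_le_mul_left m (by omega)
    omega
  have htq2 : r ≠ 0 → t + 2 ≤ q := by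
    intro hr0
    by_contra h
    push_neg at h
    have hid2 : m * q = m * t + m := by
      rw [show q = t + 1 by omega, Nat.mul_succ]
    omega
  -- the max bound
  have hN : ∀ z : Fin m → ℕ, (∀ j, 1 ≤ z j) → (∑ j, z j) = m * q - (s+1) →
      (∏ j, z j) ≤ M := by
    intro z hz1 hzsum
    have hball := balanced_max m hm (m * q - (s+1)) (∑ j, (z j)^2) z le_rfl hz1 hzsum
    rcases Nat.eq_zero_or_pos r with hr0 | hrpos
    · have hNval : m * q - (s+1) = m * (q - t) := by
        have : m * q = m * t + m * (q - t) := by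
          rw [← Nat.mul_add]
          congr 1
          omega
        omega
      rw [hNval, Nat.mul_mod_right, Nat.mul_div_cancel_left _ hm] at hball
      simp only [pow_zero, mul_one, Nat.sub_zero] at hball
      rw [hM, hr0]
      simp only [pow_zero, one_mul, Nat.sub_zero]
      exact hball
    · have ht2 := htq2 (by omega)
      have hNval : m * q - (s+1) = m * (q - t - 1) + (m - r) := by
        have h1 : m * q = m * t + m * (q - t - 1) + m := by
          have he : t + (q - t - 1) + 1 = q := by omega
          calc m * q = m * (t + (q - t - 1) + 1) := by rw [he]
            _ = m * t + m * (q - t - 1) + m := by ring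
        omega
      rw [hNval, Nat.mul_add_mod, Nat.mod_eq_of_lt (by omega : m - r < m),
        Nat.mul_add_div hm, Nat.div_eq_of_lt (by omega : m - r < m), Nat.add_zero] at hball
      have e1 : m - (m - r) = r := by omega
      have e2 : q - t - 1 + 1 = q - t := by omega
      rw [e1, e2] at hball
      exact hball
  -- backward implication and the final statement part
  have hpart2 : M < δ → A = Hypset q m δ := by
    intro hMδ
    ext i
    rw [hsumA, hmemH]
    constructor
    · rintro ⟨hiq, his⟩
      exact ⟨hiq, hup i ((hsumA i).mpr ⟨hiq, his⟩)⟩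
    · rintro ⟨hiq, hid⟩
      refine ⟨hiq, ?_⟩
      by_contra hgt
      push_neg at hgt
      have hsum1 : s + 1 ≤ ∑ j, i j := hgt
      set j0 : Fin m := ⟨0, hm⟩ with hj0
      have hszq : (∑ j, (q - i j)) + (∑ j, i j) = m * q := by
        rw [← Finset.sum_add_distrib,
          Finset.sum_congr rfl (g := fun _ => q) (fun j _ => by have := hiq j; show q - i j + i j = q; omega),
          Finset.sum_const, Finset.card_univ, Fintype.card_fin, smul_eq_mul]
      have hs1q : s + 1 ≤ m * q := by omega
      set D := (m * q - (s+1)) - (∑ j, (q - i j)) with hD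
      set z' : Fin m → ℕ := Function.update (fun j => q - i j) j0 ((q - i j0) + D) with hz'
      have hz'j0 : z' j0 = (q - i j0) + D := by rw [hz', Function.update_self]
      have hz'x : ∀ x, x ≠ j0 → z' x = q - i x := fun x hx => by
        rw [hz', Function.update_of_ne hx]
      have hz'ge : ∀ x, q - i x ≤ z' x := by
        intro x
        rcases eq_or_ne x j0 with rfl | hx
        · rw [hz'j0]; omega
        · rw [hz'x x hx]
      have hz'1 : ∀ x, 1 ≤ z' x := by
        intro x
        have h1 := hiq x
        have h2 := hz'ge x
        omega
      have hsplit : ∀ f : Fin m → ℕ,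
          (∑ x, f x) = f j0 + ∑ x ∈ Finset.univ.erase j0, f x :=
        fun f => (Finset.add_sum_erase _ f (Finset.mem_univ j0)).symm
      have hz'rest : ∑ x ∈ Finset.univ.erase j0, z' x
          = ∑ x ∈ Finset.univ.erase j0, (q - i x) :=
        Finset.sum_congr rfl (fun x hx => hz'x x (Finset.mem_erase.mp hx).1)
      have hz'sum : (∑ x, z' x) = m * q - (s + 1) := by
        rw [hsplit z', hz'rest, hz'j0]
        have := hsplit (fun j => q - i j)
        omega
      have hprodz : (∏ j, (q - i j)) ≤ ∏ j, z' j :=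
        Finset.prod_le_prod' (fun x _ => hz'ge x)
      have hfin := hN z' hz'1 hz'sum
      omega
  -- forward direction
  have hpart1 : (∃ d' : ℕ, 1 ≤ d' ∧ C = monomialCode F m (Hypset q m d')) → M < δ := by
    rintro ⟨d', _, hcode⟩
    have hArect : ∀ i ∈ A, ∀ j, i j < Fintype.card F := fun i hi j => ((hsumA i).mp hi).1 j
    have hBrect : ∀ i ∈ Hypset q m d', ∀ j, i j < Fintype.card F :=
      fun i hi j => ((hmemH d' i).mp hi).1 j
    have hsets : A = Hypset q m d' := by
      apply Set.Subset.antisymm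
      · exact code_subset_sets A _ hArect hBrect (le_of_eq hcode)
      · exact code_subset_sets _ A hBrect hArect (le_of_eq hcode.symm)
    obtain ⟨v0, hv0C, hv0ne, hv0n⟩ := hδW
    obtain ⟨e0, he0A, he0b⟩ := hlow A v0 hv0C hv0ne
    have he0H : e0 ∈ Hypset q m d' := hsets ▸ he0A
    have hd'δ : d' ≤ δ := le_trans ((hmemH d' e0).mp he0H).2 (hv0n ▸ he0b)
    set istar : Fin m →₀ ℕ :=
      Finsupp.equivFunOnFinite.symm (fun j : Fin m => if (j:ℕ) < r then t+1 else t) with histar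
    have happ : ∀ j, istar j = if (j:ℕ) < r then t+1 else t := by
      intro j
      rw [histar]
      simp [Finsupp.equivFunOnFinite]
    have hfr := card_filter_lt_fin m r hr.le
    have hcards := Finset.card_filter_add_card_filter_not
      (s := (Finset.univ : Finset (Fin m))) (p := fun j : Fin m => (j:ℕ) < r)
    simp only [Finset.card_univ, Fintype.card_fin] at hcards
    have hfnr : #(Finset.filter (fun j : Fin m => ¬ (j:ℕ) < r) Finset.univ) = m - r := by
      omega
    have hsum_istar : (∑ j, istar j) = s + 1 := by
      rw [Finset.sum_congr rfl (fun j _ => happ j), Finset.sum_ite, Finset.sum_const,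
        Finset.sum_const, hfr, hfnr, smul_eq_mul, smul_eq_mul]
      have hmt : (m - r) * t + r * t = m * t := by
        rw [← Nat.add_mul, Nat.sub_add_cancel hr.le]
      have hrt : r * (t + 1) = r * t + r := by ring
      omega
    have hprod_istar : (∏ j, (q - istar j)) = M := by
      have hptwise : ∀ j : Fin m, q - istar j = if (j:ℕ) < r then q - t - 1 else q - t := by
        intro j
        rw [happ]
        split <;> omega
      rw [Finset.prod_congr rfl (fun j _ => hptwise j), Finset.prod_ite, Finset.prod_const,
        Finset.prod_const, hfr, hfnr, hM]
    have histarq : ∀ j, istar j < q := by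
      intro j
      rw [happ]
      split
      · rename_i hjr
        have := htq2 (by omega)
        omega
      · omega
    have hnotA : istar ∉ A := by
      rw [hsumA]
      push_neg
      intro _
      rw [hsum_istar]
      omega
    have hnotH : istar ∉ Hypset q m d' := hsets ▸ hnotA
    rw [hmemH] at hnotH
    push_neg at hnotH
    have hlt := hnotH histarq
    rw [hprod_istar] at hlt
    omega
  exact ⟨⟨hpart1, fun h => ⟨δ, hδpos, congrArg (monomialCode F m) (hpart2 h)⟩⟩,
    fun h => congrArg (monomialCode F m) (hpart2 h)⟩
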